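/- arXiv:1410.0068 — 3 statements merged into one kernel-verified Lean document; each statement's English description precedes it below -/
import Mathlib

section
/- Assume V''(0) = 2, fix an integer m ≥ 0 and Ω = (r₋, r₊) with r₋ < 0 < r₊. Suppose for each small h > 0 that u(·,h) : [r₋, r₊] → ℝ has the form u(x,h) = (h^{−m/2} a(x,h) + δ(x,h)) e^{−φ(x)/h}, where: (i) a(x,h) = Σ_{0≤2j≤m} h^j a_j(x) + R(x,h) with sup_{[r₋,r₊]} |R(·,h)| = O(h^{⌊m/2⌋+1}) and sup_{[r₋,r₊]} |a(·,h) − a₀| = O(h); (ii) Σ_{0≤2j≤m} h^j a_j(x) = 2^{−m} h^{m/2} H_m(h^{−1/2}x) + Σ_{0≤2j≤m} h^j x^{m−2j+1} b_j(x) with b_j continuous on [r₋, r₊]; (iii) a₀(x) = x^m A₀(x) with A₀ continuous and strictly positive on [r₋, r₊]; (iv) sup_{[r₋,r₊]} |δ(·,h)| = O(h^N) for every N. Then there exist M > 0 and h₁ > 0 such that for all 0 < h < h₁ and all x ∈ (r₋, r₊) with |x| ≥ M h^{1/2}, one has u(x,h) ≠ 0. -/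
open MeasureTheory Set Filter

/-- The physicists' Hermite polynomial `H_m(y) = (−1)^m e^{y²}(d/dy)^m e^{−y²}`. -/
noncomputable def physHermiteFn (m : ℕ) (y : ℝ) : ℝ :=
  (-1 : ℝ) ^ m * Real.exp (y ^ 2) * iteratedDeriv m (fun t : ℝ => Real.exp (-t ^ 2)) y

noncomputable def physHermitePoly : ℕ → Polynomial ℝ
  | 0 => 1
  | (n+1) => 2 * (Polynomial.X * physHermitePoly n)
      - Polynomial.derivative (physHermitePoly n)

lemma iteratedDeriv_gauss (m : ℕ) :
    ∀ y : ℝ, iteratedDeriv m (fun t : ℝ => Real.exp (-t ^ 2)) y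
      = (-1 : ℝ) ^ m * Real.exp (-y ^ 2) * (physHermitePoly m).eval y := by
  induction m with
  | zero => intro y; simp [physHermitePoly]
  | succ n ih =>
    intro y
    rw [iteratedDeriv_succ]
    have hfun : iteratedDeriv n (fun t : ℝ => Real.exp (-t ^ 2))
        = fun z : ℝ => (-1 : ℝ) ^ n * (Real.exp (-z ^ 2) * (physHermitePoly n).eval z) := by
      funext z; rw [ih z]; ring
    rw [hfun]
    have h1 : HasDerivAt (fun z : ℝ => Real.exp (-z ^ 2))
        (Real.exp (-y ^ 2) * (-(2*y))) y := by
      have hp : HasDerivAt (fun z : ℝ => -z ^ 2) (-(2*y)) y := by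
        simpa using (hasDerivAt_pow 2 y).fun_neg
      simpa using hp.exp
    have h2 : HasDerivAt (fun z : ℝ => (physHermitePoly n).eval z)
        ((physHermitePoly n).derivative.eval y) y := (physHermitePoly n).hasDerivAt y
    have h3 := ((h1.fun_mul h2).const_mul ((-1:ℝ)^n)).deriv
    rw [h3]
    simp only [physHermitePoly, Polynomial.eval_sub, Polynomial.eval_mul,
      Polynomial.eval_ofNat, Polynomial.eval_X, pow_succ]
    ring

lemma physHermiteFn_eq (m : ℕ) (y : ℝ) :
    physHermiteFn m y = (physHermitePoly m).eval y := by
  rw [physHermiteFn, iteratedDeriv_gauss m y,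
    show (-1 : ℝ) ^ m * Real.exp (y ^ 2) * ((-1 : ℝ) ^ m * Real.exp (-y ^ 2)
        * (physHermitePoly m).eval y)
      = ((-1:ℝ)^m * (-1:ℝ)^m) * (Real.exp (y^2) * Real.exp (-y^2))
        * (physHermitePoly m).eval y by ring,
    ← Real.exp_add, ← pow_add]
  simp [← two_mul, pow_mul]

lemma physHermitePoly_coeff_zero (m : ℕ) : ∀ k, m < k → (physHermitePoly m).coeff k = 0 := by
  induction m with
  | zero =>
    intro k hk
    rw [physHermitePoly, Polynomial.coeff_one, if_neg (by omega)]
  | succ n ih =>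
    intro k hk
    obtain ⟨k', rfl⟩ : ∃ k', k = k' + 1 := ⟨k - 1, by omega⟩
    simp only [physHermitePoly, Polynomial.coeff_sub, Polynomial.coeff_ofNat_mul,
      Polynomial.coeff_X_mul, Polynomial.coeff_derivative,
      ih k' (by omega), ih (k' + 1) (by omega), ih (2 + k') (by omega), ih (k' + 2) (by omega)]
    ring

lemma physHermitePoly_coeff_top (m : ℕ) : (physHermitePoly m).coeff m = 2 ^ m := by
  induction m with
  | zero => simp [physHermitePoly]
  | succ n ih =>
    simp only [physHermitePoly, Polynomial.coeff_sub, Polynomial.coeff_ofNat_mul,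
      Polynomial.coeff_X_mul, Polynomial.coeff_derivative, ih,
      physHermitePoly_coeff_zero n (n+2) (by omega),
      physHermitePoly_coeff_zero n (2+n) (by omega)]
    ring

lemma physHermitePoly_growth (m : ℕ) :
    ∃ M₀ : ℝ, 1 ≤ M₀ ∧ ∀ y : ℝ, M₀ ≤ |y| →
      (2:ℝ)^m / 2 * |y|^m ≤ |(physHermitePoly m).eval y| := by
  set P := physHermitePoly m with hP
  set Q : Polynomial ℝ := P - Polynomial.C ((2:ℝ)^m) * Polynomial.X ^ m with hQ
  have hQcoeff : ∀ k, m ≤ k → Q.coeff k = 0 := by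
    intro k hk
    simp only [hQ, Polynomial.coeff_sub, Polynomial.coeff_C_mul, Polynomial.coeff_X_pow]
    rcases eq_or_lt_of_le hk with rfl | h
    · rw [hP, physHermitePoly_coeff_top]; simp
    · rw [hP, physHermitePoly_coeff_zero m k h, if_neg (by omega)]; ring
  have hQdeg : Q.natDegree < m + 1 :=
    Nat.lt_succ_of_le (Polynomial.natDegree_le_iff_coeff_eq_zero.mpr
      (fun k hk => hQcoeff k hk.le))
  set D : ℝ := ∑ i ∈ Finset.range (m+1), |Q.coeff i| with hD
  have hD0 : 0 ≤ D := Finset.sum_nonneg fun _ _ => abs_nonneg _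
  set c : ℝ := (2:ℝ)^m / 2 with hc
  have hc0 : 0 < c := by positivity
  refine ⟨max 1 ((2*D+1) / 2^m), le_max_left _ _, ?_⟩
  intro y hy
  have hy1 : (1:ℝ) ≤ |y| := le_trans (le_max_left _ _) hy
  have hy0 : (0:ℝ) < |y| := by linarith
  have hQy : |y| * |Q.eval y| ≤ D * |y|^m := by
    rw [Polynomial.eval_eq_sum_range' hQdeg]
    calc |y| * |∑ i ∈ Finset.range (m+1), Q.coeff i * y ^ i|
        ≤ |y| * ∑ i ∈ Finset.range (m+1), |Q.coeff i * y ^ i| := by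
          gcongr
          exact Finset.abs_sum_le_sum_abs _ _
      _ = ∑ i ∈ Finset.range (m+1), |Q.coeff i| * |y| ^ (i+1) := by
          rw [Finset.mul_sum]
          refine Finset.sum_congr rfl fun i _ => ?_
          rw [abs_mul, abs_pow, pow_succ]; ring
      _ ≤ ∑ i ∈ Finset.range (m+1), |Q.coeff i| * |y| ^ m := by
          refine Finset.sum_le_sum fun i hi => ?_
          rcases Nat.lt_or_ge i m with h | h
          · exact mul_le_mul_of_nonneg_left (pow_le_pow_right₀ hy1 (by omega)) (abs_nonneg _)
          · rw [hQcoeff i h]; simp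
      _ = D * |y|^m := by rw [← Finset.sum_mul]
  have hQy2 : |Q.eval y| ≤ c * |y|^m := by
    have hM : (2*D+1) / 2^m ≤ |y| := le_trans (le_max_right _ _) hy
    have hM' : 2*D+1 ≤ 2^m * |y| := by
      rw [div_le_iff₀ (by positivity : (0:ℝ) < 2^m)] at hM
      linarith [hM]
    have hym : (0:ℝ) < |y|^m := by positivity
    have key : D * |y|^m ≤ |y| * (c * |y|^m) := by
      rw [hc]
      nlinarith [hym, hy0]
    have := le_trans hQy key
    exact le_of_mul_le_mul_left (by linarith [hQy]) hy0
  have hPQ : P.eval y = (2:ℝ)^m * y^m + Q.eval y := by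
    simp [hQ]
  rw [hPQ]
  have h1 : |(2:ℝ)^m * y^m| ≤ |(2:ℝ)^m * y^m + Q.eval y| + |Q.eval y| := by
    have := abs_add_le ((2:ℝ)^m * y^m + Q.eval y) (-(Q.eval y))
    simpa using this
  have h2 : |(2:ℝ)^m * y^m| = (2:ℝ)^m * |y|^m := by
    rw [abs_mul, abs_pow, abs_pow, abs_two]
  have h2m : (2:ℝ)^m = 2*c := by rw [hc]; ring
  have h3 : (2:ℝ)^m * |y|^m = 2*(c*|y|^m) := by rw [h2m]; ring
  linarith [h1, h2, hQy2, h3]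

lemma physHermiteFn_growth (m : ℕ) :
    ∃ M₀ : ℝ, 1 ≤ M₀ ∧ ∀ y : ℝ, M₀ ≤ |y| →
      (2:ℝ)^m / 2 * |y|^m ≤ |physHermiteFn m y| := by
  obtain ⟨M₀, h1, h2⟩ := physHermitePoly_growth m
  exact ⟨M₀, h1, fun y hy => by rw [physHermiteFn_eq]; exact h2 y hy⟩

set_option maxHeartbeats 1000000 in
theorem WKB_positivity
    (V : ℝ → ℝ)
    (hV : ContDiff ℝ (⊤ : ℕ∞) V)
    (hV0 : V 0 = 0) (hV0' : deriv V 0 = 0)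
    (hV2 : iteratedDeriv 2 V 0 = 2)
    (hVpos : ∀ x : ℝ, x ≠ 0 → 0 < V x)
    (hVinf : 0 < Filter.liminf V (Filter.atBot ⊔ Filter.atTop))
    (m : ℕ) (rm rp : ℝ) (hrm : rm < 0) (hrp : 0 < rp)
    -- the phase function φ
    (φ : ℝ → ℝ)
    (hφ : ∀ x : ℝ, φ x = Real.sign x * ∫ t in (0:ℝ)..x, Real.sqrt (V t))
    -- structure of u(·,h), valid for small h
    (h₁ : ℝ) (hh₁ : 0 < h₁)
    (u a δ' : ℝ → ℝ → ℝ) (aj bj : ℕ → ℝ → ℝ) (A0 : ℝ → ℝ)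
    (hu : ∀ h : ℝ, 0 < h → h < h₁ → ∀ x ∈ Set.Icc rm rp,
      u h x = (h ^ (-(m : ℝ) / 2) * a h x + δ' h x) * Real.exp (-φ x / h))
    -- (i) asymptotics of a(·,h)
    (ha : ∃ C h₀ : ℝ, 0 < C ∧ 0 < h₀ ∧ ∀ h : ℝ, 0 < h → h < h₀ → ∀ x ∈ Set.Icc rm rp,
      |a h x - ∑ j ∈ Finset.range (m / 2 + 1), h ^ j * aj j x| ≤ C * h ^ (m / 2 + 1) ∧
      |a h x - aj 0 x| ≤ C * h)
    -- (ii) Hermite polynomial structure of the first terms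
    (hbj : ∀ j : ℕ, 2 * j ≤ m → ContinuousOn (bj j) (Set.Icc rm rp))
    (hHerm : ∀ h : ℝ, 0 < h → h < h₁ → ∀ x ∈ Set.Icc rm rp,
      ∑ j ∈ Finset.range (m / 2 + 1), h ^ j * aj j x =
        ((2 : ℝ) ^ m)⁻¹ * h ^ ((m : ℝ) / 2) * physHermiteFn m (h ^ (-(1 : ℝ) / 2) * x) +
          ∑ j ∈ Finset.range (m / 2 + 1), h ^ j * x ^ (m - 2 * j + 1) * bj j x)
    -- (iii) a₀(x) = x^m A₀(x) with A₀ continuous and strictly positive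
    (hA0 : ContinuousOn A0 (Set.Icc rm rp))
    (hA0pos : ∀ x ∈ Set.Icc rm rp, 0 < A0 x)
    (ha0 : ∀ x ∈ Set.Icc rm rp, aj 0 x = x ^ m * A0 x)
    -- (iv) δ(·,h) = O(h^N) for every N
    (hδ : ∀ N : ℕ, ∃ C h₀ : ℝ, 0 < C ∧ 0 < h₀ ∧ ∀ h : ℝ, 0 < h → h < h₀ →
      ∀ x ∈ Set.Icc rm rp, |δ' h x| ≤ C * h ^ N) :
    ∃ M h₂ : ℝ, 0 < M ∧ 0 < h₂ ∧ ∀ h : ℝ, 0 < h → h < h₂ →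
      ∀ x ∈ Set.Ioo rm rp, M * Real.sqrt h ≤ |x| → u h x ≠ 0 := by
  classical
  obtain ⟨C₁, h₀, hC₁, hh₀, hAa⟩ := ha
  obtain ⟨C₂, h₀', hC₂, hh₀', hDel⟩ := hδ 1
  obtain ⟨M₀, hM₀1, hM₀⟩ := physHermiteFn_growth m
  have hIccne : (Set.Icc rm rp).Nonempty := ⟨0, le_of_lt hrm, le_of_lt hrp⟩
  obtain ⟨x₀, hx₀, hmin'⟩ := isCompact_Icc.exists_isMinOn hIccne hA0
  have hmin : ∀ y ∈ Set.Icc rm rp, A0 x₀ ≤ A0 y := fun y hy => hmin' hy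
  set α := A0 x₀ with hαdef
  have hα0 : 0 < α := hA0pos x₀ hx₀
  -- uniform bounds on the bⱼ
  have hbjB : ∀ j : ℕ, ∃ B : ℝ, 0 ≤ B ∧ ∀ x ∈ Set.Icc rm rp, 2*j ≤ m → |bj j x| ≤ B := by
    intro j
    by_cases hj : 2*j ≤ m
    · obtain ⟨B, hB⟩ := isCompact_Icc.exists_bound_of_continuousOn (hbj j hj)
      refine ⟨max B 0, le_max_right _ _, fun x hx _ => ?_⟩
      have := hB x hx
      rw [Real.norm_eq_abs] at this
      exact le_trans this (le_max_left _ _)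
    · exact ⟨0, le_refl _, fun x hx h2 => absurd h2 hj⟩
  choose B hB0 hBb using hbjB
  set K : ℝ := ∑ j ∈ Finset.range (m/2+1), B j with hKdef
  have hK0 : 0 ≤ K := Finset.sum_nonneg fun j _ => hB0 j
  set ε : ℝ := 1/(4*K+1) with hεdef
  have hε0 : 0 < ε := by positivity
  set M : ℝ := max M₀ 1 with hMdef
  have hM1 : (1:ℝ) ≤ M := le_max_right _ _
  have hM0' : M₀ ≤ M := le_max_left _ _
  have hMpos : 0 < M := lt_of_lt_of_le one_pos hM1
  -- the smallness threshold
  set T₁ : ℝ := (1/(8*C₁+1))^2 with hT₁def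
  have hT₁0 : 0 < T₁ := by positivity
  set T₂ : ℝ := 1/(8*C₂+1) with hT₂def
  have hT₂0 : 0 < T₂ := by positivity
  set T₃ : ℝ := ε^m*α/(2*C₁) with hT₃def
  have hT₃0 : 0 < T₃ := by positivity
  set T₄ : ℝ := ε^m*α/(2*C₂+1) with hT₄def
  have hT₄0 : 0 < T₄ := by positivity
  set h₂ : ℝ := min h₁ (min h₀ (min h₀' (min 1 (min T₁ (min T₂ (min T₃ T₄)))))) with hh₂def
  have hh₂0 : 0 < h₂ := by
    refine lt_min hh₁ (lt_min hh₀ (lt_min hh₀' (lt_min one_pos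
      (lt_min hT₁0 (lt_min hT₂0 (lt_min hT₃0 hT₄0))))))
  refine ⟨M, h₂, hMpos, hh₂0, ?_⟩
  intro h hh hhlt x hx hxM
  have hxIcc : x ∈ Set.Icc rm rp := Set.Ioo_subset_Icc_self hx
  have lt₁ : h < h₁ := lt_of_lt_of_le hhlt (min_le_left _ _)
  have lt₀ : h < h₀ := lt_of_lt_of_le hhlt (le_trans (min_le_right _ _) (min_le_left _ _))
  have lt₀' : h < h₀' := lt_of_lt_of_le hhlt
    (le_trans (min_le_right _ _) (le_trans (min_le_right _ _) (min_le_left _ _)))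
  have lt1 : h < 1 := lt_of_lt_of_le hhlt
    (le_trans (min_le_right _ _) (le_trans (min_le_right _ _)
      (le_trans (min_le_right _ _) (min_le_left _ _))))
  have ltT₁ : h < T₁ := lt_of_lt_of_le hhlt
    (le_trans (min_le_right _ _) (le_trans (min_le_right _ _)
      (le_trans (min_le_right _ _) (le_trans (min_le_right _ _) (min_le_left _ _)))))
  have ltT₂ : h < T₂ := lt_of_lt_of_le hhlt
    (le_trans (min_le_right _ _) (le_trans (min_le_right _ _)
      (le_trans (min_le_right _ _) (le_trans (min_le_right _ _)
        (le_trans (min_le_right _ _) (min_le_left _ _))))))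
  have ltT₃ : h < T₃ := lt_of_lt_of_le hhlt
    (le_trans (min_le_right _ _) (le_trans (min_le_right _ _)
      (le_trans (min_le_right _ _) (le_trans (min_le_right _ _)
        (le_trans (min_le_right _ _) (le_trans (min_le_right _ _) (min_le_left _ _)))))))
  have ltT₄ : h < T₄ := lt_of_lt_of_le hhlt
    (le_trans (min_le_right _ _) (le_trans (min_le_right _ _)
      (le_trans (min_le_right _ _) (le_trans (min_le_right _ _)
        (le_trans (min_le_right _ _) (le_trans (min_le_right _ _) (min_le_right _ _)))))))
  rw [hu h hh lt₁ x hxIcc]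
  refine mul_ne_zero ?_ (Real.exp_ne_zero _)
  -- set up √h
  set t : ℝ := Real.sqrt h with htdef
  have ht0 : 0 < t := Real.sqrt_pos.mpr hh
  have ht2 : t^2 = h := Real.sq_sqrt hh.le
  have ht1 : t ≤ 1 := by
    rw [htdef]
    calc Real.sqrt h ≤ Real.sqrt 1 := Real.sqrt_le_sqrt lt1.le
      _ = 1 := Real.sqrt_one
  have htm0 : 0 < t^m := pow_pos ht0 m
  have hsqrt : t = h ^ ((1:ℝ)/2) := by rw [htdef, Real.sqrt_eq_rpow]
  have hpow1 : t^m = h ^ ((m:ℝ)/2) := by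
    rw [hsqrt, ← Real.rpow_natCast (h ^ ((1:ℝ)/2)) m, ← Real.rpow_mul hh.le,
      show ((1:ℝ)/2) * (m:ℝ) = (m:ℝ)/2 by ring]
  have hpow2 : h ^ (-(m:ℝ)/2) = (t^m)⁻¹ := by
    rw [show -(m:ℝ)/2 = -((m:ℝ)/2) by ring, Real.rpow_neg hh.le, hpow1]
  have hpow3 : h ^ (-(1:ℝ)/2) = t⁻¹ := by
    rw [show -(1:ℝ)/2 = -((1:ℝ)/2) by ring, Real.rpow_neg hh.le, hsqrt]
  -- bounds from hypotheses
  have hδb : |δ' h x| ≤ C₂ * h := by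
    have := hDel h hh lt₀' x hxIcc
    simpa using this
  obtain ⟨hA1, hA2⟩ := hAa h hh lt₀ x hxIcc
  -- key lower bound
  have key : C₂ * h < (t^m)⁻¹ * |a h x| := by
    rcases le_or_gt |x| ε with hcase | hcase
    · -- small x: use the Hermite structure
      have hS := hHerm h hh lt₁ x hxIcc
      set S : ℝ := ∑ j ∈ Finset.range (m / 2 + 1), h ^ j * aj j x with hSdef
      set y : ℝ := h ^ (-(1:ℝ)/2) * x with hydef
      have hyabs : |y| = |x| / t := by
        rw [hydef, hpow3, abs_mul, abs_inv, abs_of_pos ht0, inv_mul_eq_div]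
      have hMy : M ≤ |y| := by
        rw [hyabs, le_div_iff₀ ht0]
        exact hxM
      have hHy : (2:ℝ)^m / 2 * |y|^m ≤ |physHermiteFn m y| :=
        hM₀ y (le_trans hM0' hMy)
      have hty : t * |y| = |x| := by
        rw [hyabs, mul_div_cancel₀ _ (ne_of_gt ht0)]
      have htym : t^m * |y|^m = |x|^m := by rw [← mul_pow, hty]
      -- bound on the remainder sum T
      have hxt : t ≤ |x| := le_trans (le_mul_of_one_le_left ht0.le hM1) hxM
      have hhx2 : h ≤ |x|^2 := by
        rw [← ht2]
        exact pow_le_pow_left₀ ht0.le hxt 2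
      set Tr : ℝ := ∑ j ∈ Finset.range (m / 2 + 1), h ^ j * x ^ (m - 2 * j + 1) * bj j x
        with hTrdef
      have hTrb : |Tr| ≤ K * |x|^(m+1) := by
        rw [hTrdef]
        calc |∑ j ∈ Finset.range (m / 2 + 1), h ^ j * x ^ (m - 2 * j + 1) * bj j x|
            ≤ ∑ j ∈ Finset.range (m / 2 + 1), |h ^ j * x ^ (m - 2 * j + 1) * bj j x| :=
              Finset.abs_sum_le_sum_abs _ _
          _ ≤ ∑ j ∈ Finset.range (m / 2 + 1), |x|^(m+1) * B j := by
              refine Finset.sum_le_sum fun j hj => ?_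
              have hjm : 2*j ≤ m := by
                have := Finset.mem_range.mp hj
                omega
              have hb := hBb j x hxIcc hjm
              rw [abs_mul, abs_mul, abs_pow, abs_pow, abs_of_pos hh]
              have e1 : h ^ j ≤ (|x|^2) ^ j := pow_le_pow_left₀ hh.le hhx2 j
              have e2 : h ^ j * |x| ^ (m - 2 * j + 1) ≤ |x|^(m+1) := by
                calc h ^ j * |x| ^ (m - 2 * j + 1)
                    ≤ (|x|^2) ^ j * |x| ^ (m - 2 * j + 1) :=
                      mul_le_mul_of_nonneg_right e1 (pow_nonneg (abs_nonneg _) _)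
                  _ = |x| ^ (2*j + (m - 2*j + 1)) := by rw [← pow_mul, ← pow_add]
                  _ = |x|^(m+1) := by congr 1; omega
              calc h ^ j * |x| ^ (m - 2 * j + 1) * |bj j x|
                  ≤ h ^ j * |x| ^ (m - 2 * j + 1) * B j :=
                    mul_le_mul_of_nonneg_left hb (by positivity)
                _ ≤ |x|^(m+1) * B j := mul_le_mul_of_nonneg_right e2 (hB0 j)
          _ = K * |x|^(m+1) := by rw [← Finset.mul_sum, ← hKdef, mul_comm]
      -- bound |Tr| by (1/4)|x|^m
      have hx0 : 0 < |x| := lt_of_lt_of_le (mul_pos hMpos ht0) hxM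
      have hTrb2 : |Tr| ≤ (1/4) * |x|^m := by
        have : K * |x| ≤ 1/4 := by
          have h1 : K * |x| ≤ K * ε := mul_le_mul_of_nonneg_left hcase hK0
          have h2 : K * ε ≤ 1/4 := by
            rw [hεdef]
            rw [mul_one_div, div_le_iff₀ (by positivity : (0:ℝ) < 4*K+1)]
            linarith
          linarith
        calc |Tr| ≤ K * |x|^(m+1) := hTrb
          _ = (K * |x|) * |x|^m := by ring
          _ ≤ (1/4) * |x|^m := mul_le_mul_of_nonneg_right this (pow_nonneg (abs_nonneg _) _)
      -- lower bound on |S|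
      have hmain : (1/2) * |x|^m ≤ |((2:ℝ)^m)⁻¹ * h ^ ((m:ℝ)/2) * physHermiteFn m y| := by
        have hpos2m : (0:ℝ) < (2:ℝ)^m := by positivity
        have hpos3 : (0:ℝ) < h ^ ((m:ℝ)/2) := by rw [← hpow1]; exact htm0
        rw [abs_mul, abs_mul, abs_inv, abs_of_pos hpos2m, abs_of_pos hpos3, ← hpow1]
        calc (1/2) * |x|^m = ((2:ℝ)^m)⁻¹ * (t^m * ((2:ℝ)^m/2 * |y|^m)) := by
              rw [show t^m * ((2:ℝ)^m/2 * |y|^m) = (2:ℝ)^m/2 * (t^m * |y|^m) by ring, htym]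
              field_simp
          _ ≤ ((2:ℝ)^m)⁻¹ * (t^m * |physHermiteFn m y|) := by
              apply mul_le_mul_of_nonneg_left _ (by positivity)
              exact mul_le_mul_of_nonneg_left hHy htm0.le
          _ = ((2:ℝ)^m)⁻¹ * t^m * |physHermiteFn m y| := by ring
      have hSlow : (1/4) * |x|^m ≤ |S| := by
        have habs : |((2:ℝ)^m)⁻¹ * h ^ ((m:ℝ)/2) * physHermiteFn m y| ≤ |S| + |Tr| := by
          have : ((2:ℝ)^m)⁻¹ * h ^ ((m:ℝ)/2) * physHermiteFn m y = S + (-Tr) := by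
            rw [hS]; ring
          rw [this]
          calc |S + (-Tr)| ≤ |S| + |-Tr| := abs_add_le _ _
            _ = |S| + |Tr| := by rw [abs_neg]
        linarith [hmain, hTrb2, habs]
      -- lower bound on |a|
      have hxm_low : t^m ≤ |x|^m := pow_le_pow_left₀ ht0.le hxt m
      have hC₁h : C₁ * h ^ (m/2+1) ≤ C₁ * (t^m * t) := by
        apply mul_le_mul_of_nonneg_left _ hC₁.le
        have : h ^ (m/2+1) = t ^ (2*(m/2+1)) := by
          rw [pow_mul, ht2]
        rw [this, ← pow_succ]
        exact pow_le_pow_of_le_one ht0.le ht1 (by omega)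
      have halow : t^m * (1/4 - C₁ * t) ≤ |a h x| := by
        have h5 : |S| ≤ |a h x| + C₁ * h ^ (m/2+1) := by
          have : |S| - |a h x| ≤ |S - a h x| := by
            have := abs_sub_abs_le_abs_sub S (a h x)
            linarith
          rw [abs_sub_comm] at this
          linarith [hA1, this]
        have h6 : (1/4) * |x|^m - C₁ * (t^m*t) ≤ |a h x| := by
          have := le_trans hC₁h (le_refl _)
          linarith [hSlow, h5, hC₁h]
        have h7 : (1/4) * t^m ≤ (1/4) * |x|^m := by linarith [hxm_low]
        calc t^m * (1/4 - C₁ * t) = (1/4) * t^m - C₁ * (t^m * t) := by ring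
          _ ≤ (1/4) * |x|^m - C₁ * (t^m*t) := by linarith
          _ ≤ |a h x| := h6
      have hC₁t : C₁ * t < 1/8 := by
        have ht' : t < 1/(8*C₁+1) := by
          have h9 : t < Real.sqrt T₁ := by
            rw [htdef]
            exact Real.sqrt_lt_sqrt hh.le ltT₁
          rwa [hT₁def, Real.sqrt_sq (by positivity)] at h9
        have h11 : C₁ * t < C₁ * (1/(8*C₁+1)) := mul_lt_mul_of_pos_left ht' hC₁
        have h12 : C₁ * (1/(8*C₁+1)) ≤ 1/8 := by
          rw [mul_one_div, div_le_div_iff₀ (by positivity) (by norm_num)]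
          linarith
        linarith
      have hfinal : (1/8 : ℝ) ≤ (t^m)⁻¹ * |a h x| := by
        have := mul_le_mul_of_nonneg_left halow (inv_nonneg.mpr htm0.le)
        rw [inv_mul_cancel_left₀ (ne_of_gt htm0)] at this
        linarith
      have hC₂h : C₂ * h < 1/8 := by
        have h11 : C₂ * h < C₂ * T₂ := mul_lt_mul_of_pos_left ltT₂ hC₂
        have h12 : C₂ * T₂ ≤ 1/8 := by
          rw [hT₂def, mul_one_div, div_le_div_iff₀ (by positivity) (by norm_num)]
          linarith
        linarith
      linarith
    · -- large x: use a ≈ a₀ = xᵐ A₀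
      have hεx : ε^m ≤ |x|^m := pow_le_pow_left₀ hε0.le hcase.le m
      have ha0x : |aj 0 x| = |x|^m * A0 x := by
        rw [ha0 x hxIcc, abs_mul, abs_pow, abs_of_pos (hA0pos x hxIcc)]
      have hαx : α ≤ A0 x := hmin x hxIcc
      have hax_low : ε^m * α ≤ |aj 0 x| := by
        rw [ha0x]
        have h0 : (0:ℝ) ≤ |x|^m := pow_nonneg (abs_nonneg _) m
        calc ε^m * α ≤ |x|^m * α := mul_le_mul_of_nonneg_right hεx hα0.le
          _ ≤ |x|^m * A0 x := mul_le_mul_of_nonneg_left hαx h0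
      have halow : ε^m*α/2 ≤ |a h x| := by
        have h5 : |aj 0 x| ≤ |a h x| + C₁ * h := by
          have := abs_sub_abs_le_abs_sub (aj 0 x) (a h x)
          rw [abs_sub_comm] at this
          linarith [hA2]
        have h6 : C₁ * h < ε^m*α/2 := by
          have h10 : h * (2*C₁) < ε^m*α := by
            rw [← lt_div_iff₀ (by positivity : (0:ℝ) < 2*C₁)]
            rwa [hT₃def] at ltT₃
          linarith
        linarith [hax_low]
      have htinv : (1:ℝ) ≤ (t^m)⁻¹ :=
        (one_le_inv₀ htm0).mpr (pow_le_one₀ ht0.le ht1)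
      have hfinal : ε^m*α/2 ≤ (t^m)⁻¹ * |a h x| := by
        calc ε^m*α/2 ≤ |a h x| := halow
          _ = 1 * |a h x| := (one_mul _).symm
          _ ≤ (t^m)⁻¹ * |a h x| := mul_le_mul_of_nonneg_right htinv (abs_nonneg _)
      have hC₂h : C₂ * h < ε^m*α/2 := by
        have hApos : (0:ℝ) < ε^m*α := by positivity
        have h11 : C₂ * h < C₂ * T₄ := mul_lt_mul_of_pos_left ltT₄ hC₂
        have h12 : C₂ * T₄ ≤ ε^m*α/2 := by
          rw [hT₄def, mul_div_assoc', div_le_div_iff₀ (by positivity) (by norm_num : (0:ℝ) < 2)]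
          linarith
        linarith
      linarith
  -- conclude
  intro heq
  have h9 : (t^m)⁻¹ * |a h x| = |δ' h x| := by
    have : h ^ (-(m:ℝ)/2) * a h x = -δ' h x := by linarith [heq]
    have h10 : |h ^ (-(m:ℝ)/2) * a h x| = |δ' h x| := by rw [this, abs_neg]
    rw [hpow2, abs_mul, abs_inv, abs_of_pos htm0] at h10
    exact h10
  rw [h9] at key
  linarith [hδb]
end

section
/- Let ν > 0, h > 0, 0 < L' < ∞, let W : [0, L'] → ℝ be continuous, and let Φ ∈ C²([0, L']). Let u(x) = x^{1/2+ν} y(x) with y ∈ C²([0, L']) real-valued and u(L') = 0, and set (Qu)(x) = −h²u''(x) + h²(ν²−1/4)x⁻²u(x) + W(x)u(x). Then all integrals below converge absolutely and ∫₀^{L'} [ h²·((e^{Φ(x)/h}u(x))')² + h²(ν²−1/4)x⁻²·(e^{Φ(x)/h}u(x))² + (W(x) − Φ'(x)²)·(e^{Φ(x)/h}u(x))² ] dx = ∫₀^{L'} e^{2Φ(x)/h}·(Qu)(x)·u(x) dx. -/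
open MeasureTheory Set Filter Topology

lemma aux_integrableOn_rpow_mul (L' r : ℝ) (hL' : 0 < L') (hr : -1 < r)
    (g : ℝ → ℝ) (hg : ContinuousOn g (Set.Icc 0 L')) :
    MeasureTheory.IntegrableOn (fun x : ℝ => x ^ r * g x) (Set.Ioo 0 L') volume := by
  obtain ⟨M, hM⟩ := (isCompact_Icc (a := (0:ℝ)) (b := L')).exists_bound_of_continuousOn hg
  have hbase : IntegrableOn (fun x : ℝ => x ^ r) (Set.Ioc 0 L') volume := by
    have := intervalIntegral.intervalIntegrable_rpow' (a := (0:ℝ)) (b := L') hr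
    rwa [intervalIntegrable_iff_integrableOn_Ioc_of_le hL'.le] at this
  have hbase2 : IntegrableOn (fun x : ℝ => M * x ^ r) (Set.Ioo 0 L') volume :=
    ((hbase.mono_set Set.Ioo_subset_Ioc_self).const_mul M)
  refine hbase2.mono' ?_ ?_
  · refine ContinuousOn.aestronglyMeasurable ?_ measurableSet_Ioo
    refine ContinuousOn.mul ?_ (hg.mono Set.Ioo_subset_Icc_self)
    intro x hx
    exact (Real.continuousAt_rpow_const x r (Or.inl hx.1.ne')).continuousWithinAt
  · rw [ae_restrict_iff' measurableSet_Ioo]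
    filter_upwards with x hx
    have h1 : (0:ℝ) ≤ x ^ r := Real.rpow_nonneg hx.1.le r
    have h2 : ‖g x‖ ≤ M := hM x ⟨hx.1.le, hx.2.le⟩
    have h3 : (0:ℝ) ≤ M := le_trans (norm_nonneg _) h2
    rw [norm_mul, Real.norm_of_nonneg h1]
    calc x ^ r * ‖g x‖ ≤ x ^ r * M := by nlinarith
      _ = M * x ^ r := by ring

set_option maxHeartbeats 1000000 in
theorem agmon_energy_identity
    (ν h L' : ℝ) (hν : 0 < ν) (hh : 0 < h) (hL' : 0 < L')
    (W : ℝ → ℝ) (hW : ContinuousOn W (Set.Icc 0 L'))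
    (Φ : ℝ → ℝ) (hΦ : ContDiffOn ℝ 2 Φ (Set.Icc 0 L'))
    (y : ℝ → ℝ) (hy : ContDiffOn ℝ 2 y (Set.Icc 0 L'))
    (huL' : L' ^ ((1:ℝ)/2 + ν) * y L' = 0) :
    MeasureTheory.IntegrableOn
      (fun x : ℝ =>
        h ^ 2 * (deriv (fun t : ℝ =>
            Real.exp (Φ t / h) * (t ^ ((1:ℝ)/2 + ν) * y t)) x) ^ 2 +
        h ^ 2 * (ν ^ 2 - 1/4) * (x ^ 2)⁻¹ *
            (Real.exp (Φ x / h) * (x ^ ((1:ℝ)/2 + ν) * y x)) ^ 2 +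
        (W x - (deriv Φ x) ^ 2) *
            (Real.exp (Φ x / h) * (x ^ ((1:ℝ)/2 + ν) * y x)) ^ 2)
      (Set.Ioo 0 L') volume ∧
    MeasureTheory.IntegrableOn
      (fun x : ℝ =>
        Real.exp (2 * Φ x / h) *
          (-(h ^ 2) * deriv (deriv (fun t : ℝ => t ^ ((1:ℝ)/2 + ν) * y t)) x +
            h ^ 2 * (ν ^ 2 - 1/4) * (x ^ 2)⁻¹ * (x ^ ((1:ℝ)/2 + ν) * y x) +
            W x * (x ^ ((1:ℝ)/2 + ν) * y x)) *
          (x ^ ((1:ℝ)/2 + ν) * y x))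
      (Set.Ioo 0 L') volume ∧
    (∫ x in Set.Ioo 0 L',
        (h ^ 2 * (deriv (fun t : ℝ =>
            Real.exp (Φ t / h) * (t ^ ((1:ℝ)/2 + ν) * y t)) x) ^ 2 +
        h ^ 2 * (ν ^ 2 - 1/4) * (x ^ 2)⁻¹ *
            (Real.exp (Φ x / h) * (x ^ ((1:ℝ)/2 + ν) * y x)) ^ 2 +
        (W x - (deriv Φ x) ^ 2) *
            (Real.exp (Φ x / h) * (x ^ ((1:ℝ)/2 + ν) * y x)) ^ 2)) =
      ∫ x in Set.Ioo 0 L',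
        Real.exp (2 * Φ x / h) *
          (-(h ^ 2) * deriv (deriv (fun t : ℝ => t ^ ((1:ℝ)/2 + ν) * y t)) x +
            h ^ 2 * (ν ^ 2 - 1/4) * (x ^ 2)⁻¹ * (x ^ ((1:ℝ)/2 + ν) * y x) +
            W x * (x ^ ((1:ℝ)/2 + ν) * y x)) *
          (x ^ ((1:ℝ)/2 + ν) * y x) := by
  set LHSint : ℝ → ℝ := fun x : ℝ =>
        h ^ 2 * (deriv (fun t : ℝ =>
            Real.exp (Φ t / h) * (t ^ ((1:ℝ)/2 + ν) * y t)) x) ^ 2 +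
        h ^ 2 * (ν ^ 2 - 1/4) * (x ^ 2)⁻¹ *
            (Real.exp (Φ x / h) * (x ^ ((1:ℝ)/2 + ν) * y x)) ^ 2 +
        (W x - (deriv Φ x) ^ 2) *
            (Real.exp (Φ x / h) * (x ^ ((1:ℝ)/2 + ν) * y x)) ^ 2 with hLHSdef
  set RHSint : ℝ → ℝ := fun x : ℝ =>
        Real.exp (2 * Φ x / h) *
          (-(h ^ 2) * deriv (deriv (fun t : ℝ => t ^ ((1:ℝ)/2 + ν) * y t)) x +
            h ^ 2 * (ν ^ 2 - 1/4) * (x ^ 2)⁻¹ * (x ^ ((1:ℝ)/2 + ν) * y x) +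
            W x * (x ^ ((1:ℝ)/2 + ν) * y x)) *
          (x ^ ((1:ℝ)/2 + ν) * y x) with hRHSdef
  have hIcc : UniqueDiffOn ℝ (Set.Icc (0:ℝ) L') := uniqueDiffOn_Icc hL'
  set Y1 : ℝ → ℝ := derivWithin y (Set.Icc 0 L') with hY1def
  set Y2 : ℝ → ℝ := derivWithin Y1 (Set.Icc 0 L') with hY2def
  set P1 : ℝ → ℝ := derivWithin Φ (Set.Icc 0 L') with hP1def
  have hy1cd : ContDiffOn ℝ 1 Y1 (Set.Icc 0 L') := hy.derivWithin hIcc (by norm_num)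
  have hY1c : ContinuousOn Y1 (Set.Icc 0 L') := hy1cd.continuousOn
  have hY2c : ContinuousOn Y2 (Set.Icc 0 L') :=
    hy1cd.continuousOn_derivWithin hIcc (le_refl 1)
  have hP1c : ContinuousOn P1 (Set.Icc 0 L') :=
    hΦ.continuousOn_derivWithin hIcc (by norm_num)
  have hyc : ContinuousOn y (Set.Icc 0 L') := hy.continuousOn
  have hΦc : ContinuousOn Φ (Set.Icc 0 L') := hΦ.continuousOn
  -- pointwise derivative facts on Ioo
  have hyd : ∀ x ∈ Set.Ioo (0:ℝ) L', HasDerivAt y (Y1 x) x := by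
    intro x hx
    have hxn : Set.Icc (0:ℝ) L' ∈ 𝓝 x := Icc_mem_nhds hx.1 hx.2
    have hdy : DifferentiableAt ℝ y x :=
      ((hy.differentiableOn (by norm_num)).differentiableAt hxn)
    have : Y1 x = deriv y x := hdy.derivWithin (hIcc x (Set.Ioo_subset_Icc_self hx))
    rw [this]; exact hdy.hasDerivAt
  have hY1d : ∀ x ∈ Set.Ioo (0:ℝ) L', HasDerivAt Y1 (Y2 x) x := by
    intro x hx
    have hxn : Set.Icc (0:ℝ) L' ∈ 𝓝 x := Icc_mem_nhds hx.1 hx.2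
    have hdY1 : DifferentiableAt ℝ Y1 x :=
      ((hy1cd.differentiableOn (by norm_num)).differentiableAt hxn)
    have : Y2 x = deriv Y1 x := hdY1.derivWithin (hIcc x (Set.Ioo_subset_Icc_self hx))
    rw [this]; exact hdY1.hasDerivAt
  have hΦd : ∀ x ∈ Set.Ioo (0:ℝ) L', HasDerivAt Φ (P1 x) x := by
    intro x hx
    have hxn : Set.Icc (0:ℝ) L' ∈ 𝓝 x := Icc_mem_nhds hx.1 hx.2
    have hdΦ : DifferentiableAt ℝ Φ x :=
      ((hΦ.differentiableOn (by norm_num)).differentiableAt hxn)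
    have : P1 x = deriv Φ x := hdΦ.derivWithin (hIcc x (Set.Ioo_subset_Icc_self hx))
    rw [this]; exact hdΦ.hasDerivAt
  have hderivΦ : ∀ x ∈ Set.Ioo (0:ℝ) L', deriv Φ x = P1 x := fun x hx => (hΦd x hx).deriv
  have hud : ∀ x ∈ Set.Ioo (0:ℝ) L', HasDerivAt (fun t : ℝ => t ^ ((1:ℝ)/2 + ν) * y t)
      (((1:ℝ)/2 + ν) * x ^ ((1:ℝ)/2 + ν - 1) * y x + x ^ ((1:ℝ)/2 + ν) * Y1 x) x := by
    intro x hx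
    exact (Real.hasDerivAt_rpow_const (Or.inl hx.1.ne')).mul (hyd x hx)
  have hderivu : ∀ x ∈ Set.Ioo (0:ℝ) L',
      deriv (fun t : ℝ => t ^ ((1:ℝ)/2 + ν) * y t) x =
      ((1:ℝ)/2 + ν) * x ^ ((1:ℝ)/2 + ν - 1) * y x + x ^ ((1:ℝ)/2 + ν) * Y1 x :=
    fun x hx => (hud x hx).deriv
  have hu2d : ∀ x ∈ Set.Ioo (0:ℝ) L',
      HasDerivAt (deriv (fun t : ℝ => t ^ ((1:ℝ)/2 + ν) * y t))
      (((1:ℝ)/2 + ν) * (((1:ℝ)/2 + ν) - 1) * x ^ ((1:ℝ)/2 + ν - 2) * y x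
        + 2 * ((1:ℝ)/2 + ν) * x ^ ((1:ℝ)/2 + ν - 1) * Y1 x
        + x ^ ((1:ℝ)/2 + ν) * Y2 x) x := by
    intro x hx
    have hx0 : (0:ℝ) < x := hx.1
    have hA : HasDerivAt (fun t : ℝ => t ^ ((1:ℝ)/2 + ν - 1))
        (((1:ℝ)/2 + ν - 1) * x ^ ((1:ℝ)/2 + ν - 1 - 1)) x :=
      Real.hasDerivAt_rpow_const (Or.inl hx0.ne')
    have hB : HasDerivAt (fun t : ℝ => t ^ ((1:ℝ)/2 + ν))
        (((1:ℝ)/2 + ν) * x ^ ((1:ℝ)/2 + ν - 1)) x :=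
      Real.hasDerivAt_rpow_const (Or.inl hx0.ne')
    have h1 := ((hA.const_mul ((1:ℝ)/2 + ν)).mul (hyd x hx)).add (hB.mul (hY1d x hx))
    have h2 : HasDerivAt (fun t : ℝ =>
        ((1:ℝ)/2 + ν) * t ^ ((1:ℝ)/2 + ν - 1) * y t + t ^ ((1:ℝ)/2 + ν) * Y1 t)
        (((1:ℝ)/2 + ν) * (((1:ℝ)/2 + ν) - 1) * x ^ ((1:ℝ)/2 + ν - 2) * y x
          + 2 * ((1:ℝ)/2 + ν) * x ^ ((1:ℝ)/2 + ν - 1) * Y1 x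
          + x ^ ((1:ℝ)/2 + ν) * Y2 x) x := by
      refine h1.congr_deriv ?_
      rw [show (1:ℝ)/2 + ν - 1 - 1 = (1:ℝ)/2 + ν - 2 by ring]
      ring
    exact h2.congr_of_eventuallyEq
      (Filter.eventuallyEq_of_mem (Ioo_mem_nhds hx.1 hx.2) (fun t ht => hderivu t ht))
  have hderivu2 : ∀ x ∈ Set.Ioo (0:ℝ) L',
      deriv (deriv (fun t : ℝ => t ^ ((1:ℝ)/2 + ν) * y t)) x =
      ((1:ℝ)/2 + ν) * (((1:ℝ)/2 + ν) - 1) * x ^ ((1:ℝ)/2 + ν - 2) * y x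
        + 2 * ((1:ℝ)/2 + ν) * x ^ ((1:ℝ)/2 + ν - 1) * Y1 x
        + x ^ ((1:ℝ)/2 + ν) * Y2 x := fun x hx => (hu2d x hx).deriv
  have hvd : ∀ x ∈ Set.Ioo (0:ℝ) L',
      HasDerivAt (fun t : ℝ => Real.exp (Φ t / h) * (t ^ ((1:ℝ)/2 + ν) * y t))
      (Real.exp (Φ x / h) * (P1 x / h) * (x ^ ((1:ℝ)/2 + ν) * y x)
        + Real.exp (Φ x / h) *
          (((1:ℝ)/2 + ν) * x ^ ((1:ℝ)/2 + ν - 1) * y x + x ^ ((1:ℝ)/2 + ν) * Y1 x)) x := by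
    intro x hx
    have hexp : HasDerivAt (fun t : ℝ => Real.exp (Φ t / h))
        (Real.exp (Φ x / h) * (P1 x / h)) x := ((hΦd x hx).div_const h).exp
    exact hexp.mul (hud x hx)
  have hderivv : ∀ x ∈ Set.Ioo (0:ℝ) L',
      deriv (fun t : ℝ => Real.exp (Φ t / h) * (t ^ ((1:ℝ)/2 + ν) * y t)) x =
      Real.exp (Φ x / h) * (P1 x / h) * (x ^ ((1:ℝ)/2 + ν) * y x)
        + Real.exp (Φ x / h) *
          (((1:ℝ)/2 + ν) * x ^ ((1:ℝ)/2 + ν - 1) * y x + x ^ ((1:ℝ)/2 + ν) * Y1 x) :=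
    fun x hx => (hvd x hx).deriv
  -- rpow arithmetic helpers
  have epow : ∀ x : ℝ, 0 < x →
      (x ^ ((1:ℝ)/2 + ν) = x ^ ((1:ℝ)/2 + ν - 2) * x ^ (2:ℕ) ∧
       x ^ ((1:ℝ)/2 + ν - 1) = x ^ ((1:ℝ)/2 + ν - 2) * x ∧
       x ^ (2*ν - 1) = x ^ ((1:ℝ)/2 + ν - 2) * x ^ ((1:ℝ)/2 + ν - 2) * x ^ (2:ℕ)) := by
    intro x hx0
    refine ⟨?_, ?_, ?_⟩
    · rw [← Real.rpow_natCast x 2, ← Real.rpow_add hx0]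
      congr 1; push_cast; ring
    · have h1 := Real.rpow_add hx0 ((1:ℝ)/2 + ν - 2) 1
      rw [Real.rpow_one] at h1
      rw [show (1:ℝ)/2 + ν - 1 = (1:ℝ)/2 + ν - 2 + 1 by ring]
      exact h1
    · rw [← Real.rpow_natCast x 2, ← Real.rpow_add hx0, ← Real.rpow_add hx0]
      congr 1; push_cast; ring
  have eexp : ∀ x : ℝ, Real.exp (2 * Φ x / h) = Real.exp (Φ x / h) ^ 2 := by
    intro x
    rw [sq, ← Real.exp_add]
    congr 1; ring
  -- integrability of the two integrands
  have hintL : MeasureTheory.IntegrableOn LHSint (Set.Ioo 0 L') volume := by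
    have hgc : ContinuousOn (fun x : ℝ => Real.exp (2 * Φ x / h) *
        ((P1 x * (x * y x) + h * (((1:ℝ)/2 + ν) * y x + x * Y1 x)) ^ 2
          + h ^ 2 * (ν ^ 2 - 1/4) * (y x) ^ 2
          + (W x - (P1 x) ^ 2) * x ^ 2 * (y x) ^ 2)) (Set.Icc 0 L') := by
      have hid : ContinuousOn (fun x : ℝ => x) (Set.Icc 0 L') := continuousOn_id
      exact (((continuousOn_const.mul hΦc).div_const h).rexp).mul
        (((((hP1c.mul (hid.mul hyc)).add (continuousOn_const.mul
            ((continuousOn_const.mul hyc).add (hid.mul hY1c)))).pow 2).add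
          (continuousOn_const.mul (hyc.pow 2))).add
            (((hW.sub (hP1c.pow 2)).mul (hid.pow 2)).mul (hyc.pow 2)))
    have hbase := aux_integrableOn_rpow_mul L' (2*ν - 1) hL' (by linarith) _ hgc
    refine hbase.congr_fun ?_ measurableSet_Ioo
    intro x hx
    have hx0 : (0:ℝ) < x := hx.1
    obtain ⟨e1, e2, e3⟩ := epow x hx0
    simp only [hLHSdef]
    rw [hderivv x hx, hderivΦ x hx, e1, e2, e3, eexp x]
    field_simp
  have hintR : MeasureTheory.IntegrableOn RHSint (Set.Ioo 0 L') volume := by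
    have hgc : ContinuousOn (fun x : ℝ => Real.exp (2 * Φ x / h) *
        ((-(h ^ 2) * (((1:ℝ)/2 + ν) * (((1:ℝ)/2 + ν) - 1) * y x
            + 2 * ((1:ℝ)/2 + ν) * (x * Y1 x) + x ^ 2 * Y2 x)
          + h ^ 2 * (ν ^ 2 - 1/4) * y x + x ^ 2 * (W x * y x)) * y x)) (Set.Icc 0 L') := by
      have hid : ContinuousOn (fun x : ℝ => x) (Set.Icc 0 L') := continuousOn_id
      exact (((continuousOn_const.mul hΦc).div_const h).rexp).mul
        ((((continuousOn_const.mul (((continuousOn_const.mul hyc).add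
            (continuousOn_const.mul (hid.mul hY1c))).add ((hid.pow 2).mul hY2c))).add
          (continuousOn_const.mul hyc)).add ((hid.pow 2).mul (hW.mul hyc))).mul hyc)
    have hbase := aux_integrableOn_rpow_mul L' (2*ν - 1) hL' (by linarith) _ hgc
    refine hbase.congr_fun ?_ measurableSet_Ioo
    intro x hx
    have hx0 : (0:ℝ) < x := hx.1
    obtain ⟨e1, e2, e3⟩ := epow x hx0
    simp only [hRHSdef]
    rw [hderivu2 x hx, e1, e2, e3]
    field_simp
  -- the boundary function F and its derivative
  set F : ℝ → ℝ := fun t : ℝ => h ^ 2 * Real.exp (2 * Φ t / h) *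
      deriv (fun s : ℝ => s ^ ((1:ℝ)/2 + ν) * y s) t * (t ^ ((1:ℝ)/2 + ν) * y t) with hFdef
  have hFd : ∀ x ∈ Set.Ioo (0:ℝ) L', HasDerivAt F (LHSint x - RHSint x) x := by
    intro x hx
    have hx0 : (0:ℝ) < x := hx.1
    have hexp2 : HasDerivAt (fun t : ℝ => Real.exp (2 * Φ t / h))
        (Real.exp (2 * Φ x / h) * (2 * P1 x / h)) x := by
      have := (((hΦd x hx).const_mul 2).div_const h).exp
      convert this using 1
    have hFder := ((hexp2.const_mul (h ^ 2)).mul (hu2d x hx)).mul (hud x hx)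
    have hgoal : LHSint x - RHSint x =
        (h ^ 2 * (Real.exp (2 * Φ x / h) * (2 * P1 x / h)) *
            deriv (fun s : ℝ => s ^ ((1:ℝ)/2 + ν) * y s) x
          + h ^ 2 * Real.exp (2 * Φ x / h) *
            (((1:ℝ)/2 + ν) * (((1:ℝ)/2 + ν) - 1) * x ^ ((1:ℝ)/2 + ν - 2) * y x
              + 2 * ((1:ℝ)/2 + ν) * x ^ ((1:ℝ)/2 + ν - 1) * Y1 x
              + x ^ ((1:ℝ)/2 + ν) * Y2 x)) * (x ^ ((1:ℝ)/2 + ν) * y x)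
        + h ^ 2 * Real.exp (2 * Φ x / h) *
            deriv (fun s : ℝ => s ^ ((1:ℝ)/2 + ν) * y s) x *
          (((1:ℝ)/2 + ν) * x ^ ((1:ℝ)/2 + ν - 1) * y x + x ^ ((1:ℝ)/2 + ν) * Y1 x) := by
      obtain ⟨e1, e2, e3⟩ := epow x hx0
      simp only [hLHSdef, hRHSdef]
      rw [hderivv x hx, hderivΦ x hx, hderivu2 x hx, hderivu x hx, e1, e2, eexp x]
      field_simp
      ring
    rw [hgoal]
    exact hFder
  -- boundary limits of F
  have hyL' : y L' = 0 := by
    rcases mul_eq_zero.1 huL' with hc | hc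
    · exact absurd hc (Real.rpow_pos_of_pos hL' _).ne'
    · exact hc
  set Fexp : ℝ → ℝ := fun x : ℝ => x ^ (2*ν) *
      (h ^ 2 * Real.exp (2 * Φ x / h) * (((1:ℝ)/2 + ν) * (y x) ^ 2 + x * y x * Y1 x))
    with hFexpdef
  have hFeq : ∀ x ∈ Set.Ioo (0:ℝ) L', F x = Fexp x := by
    intro x hx
    have hx0 : (0:ℝ) < x := hx.1
    have e4 : x ^ (2*ν) = x ^ ((1:ℝ)/2 + ν - 1) * x ^ ((1:ℝ)/2 + ν) := by
      rw [← Real.rpow_add hx0]; congr 1; ring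
    have e5 : x ^ ((1:ℝ)/2 + ν) = x ^ ((1:ℝ)/2 + ν - 1) * x := by
      have h1 := Real.rpow_add hx0 ((1:ℝ)/2 + ν - 1) 1
      rw [Real.rpow_one] at h1
      rw [← h1]
      congr 1
      ring
    simp only [hFdef, hFexpdef]
    rw [hderivu x hx, e4, e5]
    ring
  have hcontFexp : ContinuousOn Fexp (Set.Icc 0 L') := by
    have hpow : Continuous fun x : ℝ => x ^ (2*ν) :=
      continuous_iff_continuousAt.2 fun x =>
        Real.continuousAt_rpow_const x (2*ν) (Or.inr (by positivity))
    have hid : ContinuousOn (fun x : ℝ => x) (Set.Icc 0 L') := continuousOn_id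
    exact (hpow.continuousOn).mul
      ((continuousOn_const.mul ((continuousOn_const.mul hΦc).div_const h).rexp).mul
        ((continuousOn_const.mul (hyc.pow 2)).add ((hid.mul hyc).mul hY1c)))
  have hIooMem0 : Set.Ioo (0:ℝ) L' ∈ 𝓝[>] (0:ℝ) :=
    Ioo_mem_nhdsGT_of_mem ⟨le_refl 0, hL'⟩
  have hIooMemL : Set.Ioo (0:ℝ) L' ∈ 𝓝[<] L' :=
    Ioo_mem_nhdsLT_of_mem ⟨hL', le_refl L'⟩
  have h0 : Tendsto F (𝓝[>] (0:ℝ)) (𝓝 0) := by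
    have hle0 : 𝓝[>] (0:ℝ) ≤ 𝓝[Set.Icc 0 L'] 0 :=
      nhdsWithin_le_iff.mpr (mem_of_superset hIooMem0 Set.Ioo_subset_Icc_self)
    have h1 : Tendsto Fexp (𝓝[>] (0:ℝ)) (𝓝 (Fexp 0)) :=
      (hcontFexp 0 ⟨le_refl 0, hL'.le⟩).mono_left hle0
    have hF0 : Fexp 0 = 0 := by
      simp only [hFexpdef]
      rw [Real.zero_rpow (by positivity : (2*ν) ≠ 0)]
      ring
    rw [hF0] at h1
    exact h1.congr' (Filter.eventuallyEq_of_mem hIooMem0 (fun t ht => (hFeq t ht).symm))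
  have hL0 : Tendsto F (𝓝[<] L') (𝓝 0) := by
    have hleL : 𝓝[<] L' ≤ 𝓝[Set.Icc 0 L'] L' :=
      nhdsWithin_le_iff.mpr (mem_of_superset hIooMemL Set.Ioo_subset_Icc_self)
    have h1 : Tendsto Fexp (𝓝[<] L') (𝓝 (Fexp L')) :=
      (hcontFexp L' ⟨hL'.le, le_refl L'⟩).mono_left hleL
    have hFL : Fexp L' = 0 := by
      simp only [hFexpdef, hyL']
      ring
    rw [hFL] at h1
    exact h1.congr' (Filter.eventuallyEq_of_mem hIooMemL (fun t ht => (hFeq t ht).symm))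
  -- FTC
  have hsub : IntervalIntegrable (fun x => LHSint x - RHSint x) volume 0 L' := by
    rw [intervalIntegrable_iff_integrableOn_Ioc_of_le hL'.le,
        integrableOn_Ioc_iff_integrableOn_Ioo]
    exact hintL.sub hintR
  have hFTC : (∫ x in (0:ℝ)..L', (LHSint x - RHSint x)) = 0 - 0 :=
    intervalIntegral.integral_eq_sub_of_hasDerivAt_of_tendsto hL' hFd hsub h0 hL0
  have hIoo0 : (∫ x in Set.Ioo (0:ℝ) L', (LHSint x - RHSint x)) = 0 := by
    rw [intervalIntegral.integral_of_le hL'.le, integral_Ioc_eq_integral_Ioo] at hFTC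
    simpa using hFTC
  have hsplit := MeasureTheory.integral_sub hintL hintR
  refine ⟨hintL, hintR, ?_⟩
  have : (∫ x in Set.Ioo (0:ℝ) L', LHSint x) - ∫ x in Set.Ioo (0:ℝ) L', RHSint x = 0 := by
    rw [← hsplit]; exact hIoo0
  linarith
end

section
/- Let ν > 0, h > 0, λ ∈ ℝ, L > 0, and let W : [0, L] → ℝ be continuous. Suppose u(x) = x^{1/2+ν} y(x) and w(x) = x^{1/2+ν} z(x) with y, z ∈ C²([0, L]) satisfy −h²u'' + h²(ν²−1/4)x⁻²u + (W − λ)u = 0 and −h²w'' + h²(ν²−1/4)x⁻²w + (W − λ)w = u on (0, L]. Then (w u' − w' u)(L) = h^{−2} ∫₀^{L} u(t)² dt. -/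
open MeasureTheory Set Filter

theorem radial_wronskian_identity
    (ν h lam L : ℝ) (hν : 0 < ν) (hh : 0 < h) (hL : 0 < L)
    (W : ℝ → ℝ) (hW : ContinuousOn W (Set.Icc 0 L))
    (y z : ℝ → ℝ)
    (hy : ContDiffOn ℝ 2 y (Set.Icc 0 L))
    (hz : ContDiffOn ℝ 2 z (Set.Icc 0 L))
    -- u = x^{1/2+ν} y solves (Q − λ)u = 0 on (0, L]
    (hueq : ∀ x ∈ Set.Ioc 0 L,
      -(h ^ 2) * derivWithin (derivWithin (fun t : ℝ => t ^ ((1:ℝ)/2 + ν) * y t)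
          (Set.Icc 0 L)) (Set.Icc 0 L) x
        + h ^ 2 * (ν ^ 2 - 1/4) * (x ^ 2)⁻¹ * (x ^ ((1:ℝ)/2 + ν) * y x)
        + (W x - lam) * (x ^ ((1:ℝ)/2 + ν) * y x) = 0)
    -- w = x^{1/2+ν} z solves (Q − λ)w = u on (0, L]
    (hweq : ∀ x ∈ Set.Ioc 0 L,
      -(h ^ 2) * derivWithin (derivWithin (fun t : ℝ => t ^ ((1:ℝ)/2 + ν) * z t)
          (Set.Icc 0 L)) (Set.Icc 0 L) x
        + h ^ 2 * (ν ^ 2 - 1/4) * (x ^ 2)⁻¹ * (x ^ ((1:ℝ)/2 + ν) * z x)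
        + (W x - lam) * (x ^ ((1:ℝ)/2 + ν) * z x) = x ^ ((1:ℝ)/2 + ν) * y x) :
    (L ^ ((1:ℝ)/2 + ν) * z L) *
        derivWithin (fun t : ℝ => t ^ ((1:ℝ)/2 + ν) * y t) (Set.Icc 0 L) L -
      derivWithin (fun t : ℝ => t ^ ((1:ℝ)/2 + ν) * z t) (Set.Icc 0 L) L *
        (L ^ ((1:ℝ)/2 + ν) * y L) =
      (h ^ 2)⁻¹ * ∫ t in (0:ℝ)..L, (t ^ ((1:ℝ)/2 + ν) * y t) ^ 2 := by
  set S : Set ℝ := Set.Icc 0 L with hSdef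
  set α : ℝ := (1:ℝ)/2 + ν with hαdef
  have hα0 : (0:ℝ) < α := by rw [hαdef]; linarith
  have hUD : UniqueDiffOn ℝ S := uniqueDiffOn_Icc hL
  have hLIoc : L ∈ Set.Ioc (0:ℝ) L := ⟨hL, le_rfl⟩
  -- first derivative of t ^ α * f t within S at interior-right points
  have key1 : ∀ (f : ℝ → ℝ), ContDiffOn ℝ 2 f S → ∀ x ∈ Set.Ioc (0:ℝ) L,
      HasDerivWithinAt (fun t : ℝ => t ^ α * f t)
        (α * x ^ (α - 1) * f x + x ^ α * derivWithin f S x) S x := by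
    intro f hf x hx
    have hxS : x ∈ S := ⟨hx.1.le, hx.2⟩
    have h1 : HasDerivWithinAt (fun t : ℝ => t ^ α) (α * x ^ (α - 1)) S x :=
      (Real.hasDerivAt_rpow_const (Or.inl hx.1.ne')).hasDerivWithinAt
    have h2 : HasDerivWithinAt f (derivWithin f S x) S x :=
      (hf.differentiableOn (by norm_num) x hxS).hasDerivWithinAt
    exact h1.mul h2
  have d1 : ∀ (f : ℝ → ℝ), ContDiffOn ℝ 2 f S → ∀ x ∈ Set.Ioc (0:ℝ) L,
      derivWithin (fun t : ℝ => t ^ α * f t) S x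
        = α * x ^ (α - 1) * f x + x ^ α * derivWithin f S x :=
    fun f hf x hx => (key1 f hf x hx).derivWithin (hUD x ⟨hx.1.le, hx.2⟩)
  -- second derivative
  have key2 : ∀ (f : ℝ → ℝ), ContDiffOn ℝ 2 f S → ∀ x ∈ Set.Ioc (0:ℝ) L,
      derivWithin (derivWithin (fun t : ℝ => t ^ α * f t) S) S x
        = α * (α - 1) * x ^ (α - 2) * f x + 2 * α * x ^ (α - 1) * derivWithin f S x
          + x ^ α * derivWithin (derivWithin f S) S x := by
    intro f hf x hx
    have hxS : x ∈ S := ⟨hx.1.le, hx.2⟩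
    have hf1 : ContDiffOn ℝ 1 (derivWithin f S) S := hf.derivWithin hUD (by norm_num)
    have hmem : Set.Ioc (0:ℝ) L ∈ nhdsWithin x S := by
      have hset : S ∩ Set.Ioi (0:ℝ) = Set.Ioc 0 L := by
        rw [hSdef]
        ext t
        simp only [Set.mem_inter_iff, Set.mem_Icc, Set.mem_Ioi, Set.mem_Ioc]
        constructor
        · rintro ⟨⟨_, h2⟩, h3⟩; exact ⟨h3, h2⟩
        · rintro ⟨h1, h2⟩; exact ⟨⟨h1.le, h2⟩, h1⟩
      rw [← hset]
      exact inter_mem_nhdsWithin S (Ioi_mem_nhds hx.1)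
    have heq : derivWithin (fun t : ℝ => t ^ α * f t) S
        =ᶠ[nhdsWithin x S] fun t : ℝ => α * t ^ (α - 1) * f t + t ^ α * derivWithin f S t :=
      Filter.eventually_of_mem hmem (fun t ht => d1 f hf t ht)
    rw [heq.derivWithin_eq (d1 f hf x hx)]
    have h1 : HasDerivWithinAt (fun t : ℝ => t ^ (α - 1)) ((α - 1) * x ^ (α - 1 - 1)) S x :=
      (Real.hasDerivAt_rpow_const (Or.inl hx.1.ne')).hasDerivWithinAt
    have h2 : HasDerivWithinAt f (derivWithin f S x) S x :=
      (hf.differentiableOn (by norm_num) x hxS).hasDerivWithinAt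
    have h3 : HasDerivWithinAt (fun t : ℝ => t ^ α) (α * x ^ (α - 1)) S x :=
      (Real.hasDerivAt_rpow_const (Or.inl hx.1.ne')).hasDerivWithinAt
    have h4 : HasDerivWithinAt (derivWithin f S) (derivWithin (derivWithin f S) S x) S x :=
      (hf1.differentiableOn (by norm_num) x hxS).hasDerivWithinAt
    have hG := ((h1.const_mul α).mul h2).add (h3.mul h4)
    rw [(show HasDerivWithinAt (fun t : ℝ => α * t ^ (α - 1) * f t + t ^ α * derivWithin f S t) _ S x from hG).derivWithin (hUD x hxS)]
    rw [show α - 1 - 1 = α - 2 by ring]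
    ring
  -- reduced ODEs for y and z
  have ey : ∀ x ∈ Set.Ioc (0:ℝ) L,
      -(h ^ 2) * (2 * α * x ^ (α - 1) * derivWithin y S x
          + x ^ α * derivWithin (derivWithin y S) S x)
        + (W x - lam) * (x ^ α * y x) = 0 := by
    intro x hx
    have e0 := hueq x hx
    rw [key2 y hy x hx] at e0
    have hx2 : x ^ (α - 2) = (x ^ 2)⁻¹ * x ^ α := by
      rw [show α - 2 = -2 + α by ring, Real.rpow_add hx.1]
      congr 1
      rw [show (-2:ℝ) = -((2:ℕ):ℝ) by norm_num, Real.rpow_neg hx.1.le, Real.rpow_natCast]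
    have hν2 : ν ^ 2 - 1/4 = α * (α - 1) := by rw [hαdef]; ring
    rw [hν2] at e0
    linear_combination e0 + (h ^ 2 * α * (α - 1) * y x) * hx2
  have ez : ∀ x ∈ Set.Ioc (0:ℝ) L,
      -(h ^ 2) * (2 * α * x ^ (α - 1) * derivWithin z S x
          + x ^ α * derivWithin (derivWithin z S) S x)
        + (W x - lam) * (x ^ α * z x) = x ^ α * y x := by
    intro x hx
    have e0 := hweq x hx
    rw [key2 z hz x hx] at e0
    have hx2 : x ^ (α - 2) = (x ^ 2)⁻¹ * x ^ α := by
      rw [show α - 2 = -2 + α by ring, Real.rpow_add hx.1]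
      congr 1
      rw [show (-2:ℝ) = -((2:ℕ):ℝ) by norm_num, Real.rpow_neg hx.1.le, Real.rpow_natCast]
    have hν2 : ν ^ 2 - 1/4 = α * (α - 1) := by rw [hαdef]; ring
    rw [hν2] at e0
    linear_combination e0 + (h ^ 2 * α * (α - 1) * z x) * hx2
  -- continuity facts
  have hyc : ContinuousOn y S := hy.continuousOn
  have hzc : ContinuousOn z S := hz.continuousOn
  have hDyc : ContinuousOn (derivWithin y S) S := (hy.derivWithin (m := 1) hUD (by norm_num)).continuousOn
  have hDzc : ContinuousOn (derivWithin z S) S := (hz.derivWithin (m := 1) hUD (by norm_num)).continuousOn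
  -- the Wronskian function
  have hcont : ContinuousOn
      (fun x : ℝ => x ^ (α + α) * (z x * derivWithin y S x - derivWithin z S x * y x)) S :=
    ((Real.continuous_rpow_const (by linarith)).continuousOn).mul
      ((hzc.mul hDyc).sub (hDzc.mul hyc))
  have hFd : ∀ x ∈ Set.Ioo (0:ℝ) L,
      HasDerivWithinAt
        (fun x : ℝ => x ^ (α + α) * (z x * derivWithin y S x - derivWithin z S x * y x))
        ((h ^ 2)⁻¹ * (x ^ α * y x) ^ 2) (Set.Ioi x) x := by
    intro x hx
    have hxS : x ∈ S := ⟨hx.1.le, hx.2.le⟩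
    have hxIoc : x ∈ Set.Ioc (0:ℝ) L := ⟨hx.1, hx.2.le⟩
    have hnb : S ∈ nhds x := by rw [hSdef]; exact Icc_mem_nhds hx.1 hx.2
    have hy1 : ContDiffOn ℝ 1 (derivWithin y S) S := hy.derivWithin hUD (by norm_num)
    have hz1 : ContDiffOn ℝ 1 (derivWithin z S) S := hz.derivWithin hUD (by norm_num)
    have hyd : HasDerivAt y (derivWithin y S x) x :=
      ((hy.differentiableOn (by norm_num) x hxS).hasDerivWithinAt).hasDerivAt hnb
    have hzd : HasDerivAt z (derivWithin z S x) x :=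
      ((hz.differentiableOn (by norm_num) x hxS).hasDerivWithinAt).hasDerivAt hnb
    have hDyd : HasDerivAt (derivWithin y S) (derivWithin (derivWithin y S) S x) x :=
      ((hy1.differentiableOn (by norm_num) x hxS).hasDerivWithinAt).hasDerivAt hnb
    have hDzd : HasDerivAt (derivWithin z S) (derivWithin (derivWithin z S) S x) x :=
      ((hz1.differentiableOn (by norm_num) x hxS).hasDerivWithinAt).hasDerivAt hnb
    have hp : HasDerivAt (fun t : ℝ => t ^ (α + α)) ((α + α) * x ^ (α + α - 1)) x :=
      Real.hasDerivAt_rpow_const (Or.inl hx.1.ne')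
    have hFd' := hp.mul ((hzd.mul hDyd).sub (hDzd.mul hyd))
    have hval : (α + α) * x ^ (α + α - 1) * (z x * derivWithin y S x - derivWithin z S x * y x)
        + x ^ (α + α) * ((derivWithin z S x * derivWithin y S x
            + z x * derivWithin (derivWithin y S) S x)
          - (derivWithin (derivWithin z S) S x * y x
            + derivWithin z S x * derivWithin y S x))
        = (h ^ 2)⁻¹ * (x ^ α * y x) ^ 2 := by
      have e1 := ey x hxIoc
      have e2 := ez x hxIoc
      have r1 : x ^ (α + α - 1) = x ^ α * x ^ (α - 1) := by
        rw [show α + α - 1 = α + (α - 1) by ring, Real.rpow_add hx.1]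
      have r2 : x ^ (α + α) = x ^ α * x ^ α := Real.rpow_add hx.1 α α
      have hh2 : (h:ℝ) ^ 2 ≠ 0 := by positivity
      apply mul_left_cancel₀ hh2
      rw [r1, r2]
      have hr : h ^ 2 * ((h ^ 2)⁻¹ * (x ^ α * y x) ^ 2) = (x ^ α * y x) ^ 2 := by
        field_simp
      rw [hr]
      linear_combination (-(x ^ α) * z x) * e1 + (x ^ α * y x) * e2
    rw [Pi.sub_apply, Pi.mul_apply, Pi.mul_apply, hval] at hFd'
    exact hFd'.hasDerivWithinAt
  have hint : IntervalIntegrable (fun x : ℝ => (h ^ 2)⁻¹ * (x ^ α * y x) ^ 2)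
      MeasureTheory.volume 0 L := by
    apply ContinuousOn.intervalIntegrable
    rw [Set.uIcc_of_le hL.le]
    exact continuousOn_const.mul
      (((Real.continuous_rpow_const hα0.le).continuousOn.mul hyc).pow 2)
  have hFTC := intervalIntegral.integral_eq_sub_of_hasDeriv_right_of_le hL.le hcont hFd hint
  have hF0 : (0:ℝ) ^ (α + α) * (z 0 * derivWithin y S 0 - derivWithin z S 0 * y 0) = 0 := by
    rw [Real.zero_rpow (by positivity), zero_mul]
  rw [hF0, sub_zero] at hFTC
  rw [d1 y hy L hLIoc, d1 z hz L hLIoc,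
    ← intervalIntegral.integral_const_mul, hFTC,
    Real.rpow_add hL α α]
  ring
end
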